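/- The number of distinct answer-functions of 1D range maximum queries on arrays of length m with pairwise distinct entries equals the Catalan number C_m = (1/(m+1))·binomial(2m, m); that is, two such arrays give the same function (i,j) ↦ argmax index of A on [i,j] if and only if their Cartesian trees coincide, and there are C_m Cartesian tree shapes. -/

import Mathlib

open BinaryTree

namespace RMQ


def arr : BinaryTree Unit → List ℕ
  | nil => []
  | node _ l r => arr l ++ (l.numNodes + r.numNodes) :: (arr r).map (· + l.numNodes)

theorem arr_perm : ∀ t : BinaryTree Unit, (arr t).Perm (List.range t.numNodes)
  | nil => by simp [arr]
  | node _ l r => by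
    have hl := arr_perm l
    have hr := arr_perm r
    simp only [arr, numNodes]
    rw [List.range_succ, List.range_add, List.append_assoc]
    refine hl.append ?_
    have hmap : ((arr r).map (· + l.numNodes)).Perm
        (List.map (fun x => l.numNodes + x) (List.range r.numNodes)) := by
      refine (hr.map _).trans ?_
      simp [Nat.add_comm]
    have h2 : ((l.numNodes + r.numNodes) :: (arr r).map (· + l.numNodes)).Perm
        ((arr r).map (· + l.numNodes) ++ [l.numNodes + r.numNodes]) :=
      List.perm_append_comm (l₁ := [l.numNodes + r.numNodes])
    exact h2.trans (hmap.append_right _)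

theorem arr_length (t : BinaryTree Unit) : (arr t).length = t.numNodes := by
  simpa using (arr_perm t).length_eq

theorem arr_nodup (t : BinaryTree Unit) : (arr t).Nodup :=
  (arr_perm t).nodup_iff.2 (List.nodup_range)

theorem arr_lt (t : BinaryTree Unit) {x : ℕ} (hx : x ∈ arr t) : x < t.numNodes := by
  have := (arr_perm t).mem_iff.1 hx
  simpa using this

theorem arr_getD_ne (t : BinaryTree Unit) {k k' : ℕ} (hk : k < t.numNodes) (hk' : k' < t.numNodes)
    (hne : k ≠ k') : (arr t).getD k 0 ≠ (arr t).getD k' 0 := by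
  rw [← arr_length] at hk hk'
  rw [List.getD_eq_getElem _ _ hk, List.getD_eq_getElem _ _ hk']
  intro h
  exact hne ((List.Nodup.getElem_inj_iff (arr_nodup t)).1 h)



theorem arr_getD_left (u : Unit) (l r : BinaryTree Unit) {k : ℕ} (hk : k < l.numNodes) :
    (arr (node u l r)).getD k 0 = (arr l).getD k 0 := by
  rw [arr, List.getD_append]
  rwa [arr_length]

theorem arr_getD_root (u : Unit) (l r : BinaryTree Unit) :
    (arr (node u l r)).getD l.numNodes 0 = l.numNodes + r.numNodes := by
  rw [arr, List.getD_append_right _ _ _ _ (by rw [arr_length])]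
  simp [arr_length]

theorem arr_getD_right (u : Unit) (l r : BinaryTree Unit) {k : ℕ} (hk : k < r.numNodes) :
    (arr (node u l r)).getD (l.numNodes + 1 + k) 0 = (arr r).getD k 0 + l.numNodes := by
  rw [arr, List.getD_append_right _ _ _ _ (by rw [arr_length]; omega)]
  rw [arr_length]
  have : l.numNodes + 1 + k - l.numNodes = k + 1 := by omega
  rw [this]
  simp only [List.getD_cons_succ]
  have hlen : k < ((arr r).map (· + l.numNodes)).length := by simp [arr_length]; omega
  rw [List.getD_eq_getElem _ _ hlen, List.getElem_map, ← List.getD_eq_getElem _ _ (by simpa [arr_length] using hk)]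
/-- `t` is the Cartesian tree of `A` on the window `[i, i + t.numNodes)`. -/
def Match (A : ℕ → ℝ) : ℕ → BinaryTree Unit → Prop
  | _, nil => True
  | i, node _ l r => Match A i l ∧ Match A (i + l.numNodes + 1) r ∧
      ∀ k < l.numNodes + r.numNodes + 1, k ≠ l.numNodes → A (i + k) < A (i + l.numNodes)

def OrdAgree (A : ℕ → ℝ) (i : ℕ) (L : List ℕ) : Prop :=
  ∀ k k', k < L.length → k' < L.length → (A (i + k) < A (i + k') ↔ L.getD k 0 < L.getD k' 0)

theorem arr_getD_mem (t : BinaryTree Unit) {k : ℕ} (hk : k < t.numNodes) : (arr t).getD k 0 ∈ arr t := by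
  rw [← arr_length] at hk
  rw [List.getD_eq_getElem _ _ hk]
  exact List.getElem_mem _

theorem match_of_ordAgree : ∀ (t : BinaryTree Unit) (i : ℕ) (A : ℕ → ℝ),
    OrdAgree A i (arr t) → Match A i t
  | nil, _, _, _ => trivial
  | node u l r, i, A, h => by
    have hlen : (arr (node u l r)).length = l.numNodes + r.numNodes + 1 := by
      rw [arr_length]; rfl
    refine ⟨match_of_ordAgree l i A ?_, match_of_ordAgree r (i + l.numNodes + 1) A ?_, ?_⟩
    · intro k k' hk hk'
      rw [arr_length] at hk hk'
      have := h k k' (by omega) (by omega)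
      rwa [arr_getD_left u l r hk, arr_getD_left u l r hk'] at this
    · intro k k' hk hk'
      rw [arr_length] at hk hk'
      have := h (l.numNodes + 1 + k) (l.numNodes + 1 + k') (by omega) (by omega)
      rw [arr_getD_right u l r hk, arr_getD_right u l r hk'] at this
      have e1 : i + (l.numNodes + 1 + k) = i + l.numNodes + 1 + k := by omega
      have e2 : i + (l.numNodes + 1 + k') = i + l.numNodes + 1 + k' := by omega
      rw [e1, e2] at this
      rw [this]
      omega
    · intro k hk hne
      have := (h k l.numNodes (by omega) (by omega)).2
      apply this
      rw [arr_getD_root u l r]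
      have hmem := arr_getD_mem (node u l r) (k := k) (by simpa [numNodes] using hk)
      have hlt := arr_lt _ hmem
      have hne' := arr_getD_ne (node u l r) (k := k) (k' := l.numNodes)
        (by simpa [numNodes] using hk) (by simp [numNodes]) hne
      rw [arr_getD_root u l r] at hne'
      simp only [numNodes] at hlt
      omega

theorem exists_match (A : ℕ → ℝ) : ∀ n i, Set.InjOn A (Set.Ico i (i + n)) →
    ∃ t : BinaryTree Unit, t.numNodes = n ∧ Match A i t := by
  intro n
  induction n using Nat.strong_induction_on with
  | _ n ih =>
    intro i hinj
    rcases Nat.eq_zero_or_pos n with h0 | hpos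
    · exact ⟨nil, by simp [h0, numNodes], trivial⟩
    · obtain ⟨p, hp, hmax⟩ := Finset.exists_max_image (Finset.Ico i (i + n)) A
        ⟨i, by simp [hpos]⟩
      rw [Finset.mem_Ico] at hp
      set a := p - i with ha
      obtain ⟨l, hln, hlm⟩ := ih a (by omega) i
        (hinj.mono (by intro x hx; simp only [Set.mem_Ico] at *; omega))
      obtain ⟨r, hrn, hrm⟩ := ih (n - a - 1) (by omega) (i + a + 1)
        (hinj.mono (by intro x hx; simp only [Set.mem_Ico] at *; omega))
      refine ⟨node () l r, by simp [numNodes]; omega, hlm, by rwa [hln], ?_⟩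
      intro k hk hne
      rw [hln, hrn] at hk
      rw [hln] at hne ⊢
      have hpa : i + a = p := by omega
      rw [hpa]
      have hkin : i + k ∈ Finset.Ico i (i + n) := by rw [Finset.mem_Ico]; omega
      refine lt_of_le_of_ne (hmax _ hkin) fun hEq => ?_
      have : i + k = p := hinj (by rw [Set.mem_Ico]; omega)
        (by rw [Set.mem_Ico]; omega) hEq
      omega

theorem argmax_eq_of_match : ∀ (t : BinaryTree Unit) (i : ℕ) (A A' : ℕ → ℝ),
    Match A i t → Match A' i t →
    ∀ x y p p', i ≤ x → x ≤ y → y < i + t.numNodes →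
      x ≤ p → p ≤ y → (∀ k, x ≤ k → k ≤ y → A k ≤ A p) →
      x ≤ p' → p' ≤ y → (∀ k, x ≤ k → k ≤ y → A' k ≤ A' p') → p = p'
  | nil, i, A, A', _, _ => by
    intro x y p p' h1 h2 h3
    simp [numNodes] at h3
    omega
  | node u l r, i, A, A', hA, hA' => by
    intro x y p p' hix hxy hy hxp hpy hmax hxp' hpy' hmax'
    simp only [numNodes] at hy
    rcases lt_trichotomy y (i + l.numNodes) with hc | hc | hc
    · -- inside left subtree
      exact argmax_eq_of_match l i A A' hA.1 hA'.1 x y p p' hix hxy (by omega)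
        hxp hpy hmax hxp' hpy' hmax'
    · -- root i + l.numNodes = y : root in [x,y]
      have hroot : ∀ (B : ℕ → ℝ), Match B i (node u l r) → ∀ q, x ≤ q → q ≤ y →
          (∀ k, x ≤ k → k ≤ y → B k ≤ B q) → q = i + l.numNodes := by
        intro B hB q hxq hqy hq
        by_contra hne
        have hk : q - i < l.numNodes + r.numNodes + 1 := by omega
        have := hB.2.2 (q - i) hk (by omega)
        have he : i + (q - i) = q := by omega
        rw [he] at this
        exact absurd (hq _ (by omega) (by omega)) (not_le_of_gt this)
      rw [hroot A hA p hxp hpy hmax, hroot A' hA' p' hxp' hpy' hmax']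
    · rcases lt_trichotomy (i + l.numNodes) x with hc2 | hc2 | hc2
      · -- inside right subtree
        exact argmax_eq_of_match r (i + l.numNodes + 1) A A' hA.2.1 hA'.2.1 x y p p'
          (by omega) hxy (by omega) hxp hpy hmax hxp' hpy' hmax'
      · -- root = x ∈ [x,y]
        have hroot : ∀ (B : ℕ → ℝ), Match B i (node u l r) → ∀ q, x ≤ q → q ≤ y →
            (∀ k, x ≤ k → k ≤ y → B k ≤ B q) → q = i + l.numNodes := by
          intro B hB q hxq hqy hq
          by_contra hne
          have hk : q - i < l.numNodes + r.numNodes + 1 := by omega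
          have := hB.2.2 (q - i) hk (by omega)
          have he : i + (q - i) = q := by omega
          rw [he] at this
          exact absurd (hq _ (by omega) (by omega)) (not_le_of_gt this)
        rw [hroot A hA p hxp hpy hmax, hroot A' hA' p' hxp' hpy' hmax']
      · -- root strictly inside [x,y]
        have hroot : ∀ (B : ℕ → ℝ), Match B i (node u l r) → ∀ q, x ≤ q → q ≤ y →
            (∀ k, x ≤ k → k ≤ y → B k ≤ B q) → q = i + l.numNodes := by
          intro B hB q hxq hqy hq
          by_contra hne
          have hk : q - i < l.numNodes + r.numNodes + 1 := by omega
          have := hB.2.2 (q - i) hk (by omega)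
          have he : i + (q - i) = q := by omega
          rw [he] at this
          exact absurd (hq _ (by omega) (by omega)) (not_le_of_gt this)
        rw [hroot A hA p hxp hpy hmax, hroot A' hA' p' hxp' hpy' hmax']

theorem tree_eq_of_match : ∀ (t t' : BinaryTree Unit) (i : ℕ) (A : ℕ → ℝ),
    Match A i t → Match A i t' → t.numNodes = t'.numNodes → t = t'
  | nil, nil, _, _, _, _ => fun _ => rfl
  | nil, node _ _ _, _, _, _, _ => fun h => by simp [numNodes] at h
  | node _ _ _, nil, _, _, _, _ => fun h => by simp [numNodes] at h
  | node u l r, node u' l' r', i, A, hA, hA' => by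
    intro hn
    simp only [numNodes] at hn
    have ha : l.numNodes = l'.numNodes := by
      by_contra hne
      have h1 := hA.2.2 l'.numNodes (by omega) (Ne.symm hne)
      have h2 := hA'.2.2 l.numNodes (by omega) hne
      exact absurd (h1.trans h2) (lt_irrefl _)
    cases u; cases u'
    have hl := tree_eq_of_match l l' i A hA.1 hA'.1 ha
    have hr := tree_eq_of_match r r' (i + l.numNodes + 1) A hA.2.1
      (by rw [ha]; exact hA'.2.1) (by omega)
    rw [hl, hr]

theorem match_transfer : ∀ (t : BinaryTree Unit) (i : ℕ) (A A' : ℕ → ℝ),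
    (∀ x y p, i ≤ x → x ≤ y → y < i + t.numNodes → x ≤ p → p ≤ y →
      (∀ k, x ≤ k → k ≤ y → A' k ≤ A' p) → (∀ k, x ≤ k → k ≤ y → A k ≤ A p)) →
    Set.InjOn A (Set.Ico i (i + t.numNodes)) →
    Match A' i t → Match A i t
  | nil, _, _, _, _, _, _ => trivial
  | node u l r, i, A, A', hag, hinj, hM => by
    have hn : (node u l r).numNodes = l.numNodes + r.numNodes + 1 := rfl
    refine ⟨?_, ?_, ?_⟩
    · exact match_transfer l i A A'
        (fun x y p h1 h2 h3 => hag x y p h1 h2 (by simp only [hn]; omega))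
        (hinj.mono (by intro x hx; simp only [Set.mem_Ico, hn] at *; omega)) hM.1
    · exact match_transfer r (i + l.numNodes + 1) A A'
        (fun x y p h1 h2 h3 => hag x y p (by omega) h2 (by simp only [hn] at *; omega))
        (hinj.mono (by intro x hx; simp only [Set.mem_Ico, hn] at *; omega)) hM.2.1
    · -- root
      have hmax' : ∀ k, i ≤ k → k ≤ i + (l.numNodes + r.numNodes) → A' k ≤ A' (i + l.numNodes) := by
        intro k hk1 hk2
        rcases eq_or_ne k (i + l.numNodes) with h | h
        · rw [h]
        · exact le_of_lt (by
            have := hM.2.2 (k - i) (by omega) (by omega)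
            have he : i + (k - i) = k := by omega
            rwa [he] at this)
      have hmax : ∀ k, i ≤ k → k ≤ i + (l.numNodes + r.numNodes) → A k ≤ A (i + l.numNodes) :=
        hag i (i + (l.numNodes + r.numNodes)) (i + l.numNodes) le_rfl (by omega)
          (by simp only [hn]; omega) (by omega) (by omega) hmax'
      intro k hk hne
      refine lt_of_le_of_ne (hmax _ (by omega) (by omega)) fun hEq => ?_
      have : i + k = i + l.numNodes := hinj
        (by simp only [Set.mem_Ico, hn]; omega) (by simp only [Set.mem_Ico, hn]; omega) hEq
      omega

/-! ### Assembly -/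


/-- the canonical real array of a tree, as a function on `ℕ` -/
noncomputable def canonExt (t : BinaryTree Unit) : ℕ → ℝ := fun k => ((arr t).getD k 0 : ℝ)

theorem match_canonExt (t : BinaryTree Unit) : Match (canonExt t) 0 t := by
  refine match_of_ordAgree t 0 _ ?_
  intro k k' _ _
  simp [canonExt, Nat.cast_lt]

theorem canonExt_injOn (t : BinaryTree Unit) : Set.InjOn (canonExt t) (Set.Ico 0 t.numNodes) := by
  intro a ha b hb hab
  simp only [Set.mem_Ico] at ha hb
  by_contra hne
  simp only [canonExt] at hab
  exact arr_getD_ne t ha.2 hb.2 hne (by exact_mod_cast hab)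

/-- the canonical real array of a tree, as a function on `Fin m` -/
noncomputable def canonA (m : ℕ) (t : BinaryTree Unit) : Fin m → ℝ := fun j => canonExt t j.val

theorem canonA_injective {m : ℕ} {t : BinaryTree Unit} (h : t.numNodes = m) :
    Function.Injective (canonA m t) := by
  intro a b hab
  have := canonExt_injOn t (by simp [h, a.isLt]) (by simp [h, b.isLt]) hab
  exact Fin.ext this

/-- the answer function of an array -/
noncomputable def ansF {m : ℕ} (A : Fin m → ℝ) : Fin m → Fin m → Fin m := fun i j =>
  if h : i ≤ j then
    Classical.choose (Finset.exists_max_image (Finset.Icc i j) A ⟨i, Finset.mem_Icc.2 ⟨le_rfl, h⟩⟩)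
  else i

theorem ansF_spec {m : ℕ} (A : Fin m → ℝ) {i j : Fin m} (h : i ≤ j) :
    ansF A i j ∈ Finset.Icc i j ∧ ∀ k ∈ Finset.Icc i j, A k ≤ A (ansF A i j) := by
  rw [ansF, dif_pos h]
  obtain ⟨h1, h2⟩ := Classical.choose_spec
    (Finset.exists_max_image (Finset.Icc i j) A ⟨i, Finset.mem_Icc.2 ⟨le_rfl, h⟩⟩)
  exact ⟨h1, h2⟩

theorem ansF_lt {m : ℕ} (A : Fin m → ℝ) {i j : Fin m} (h : j < i) : ansF A i j = i := by
  rw [ansF, dif_neg (not_le.2 h)]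

/-- translate Fin-argmax properties to ℕ-window argmax properties -/
theorem bridge {m : ℕ} (A : Fin m → ℝ) (E : ℕ → ℝ) (hE : ∀ k (h : k < m), E k = A ⟨k, h⟩)
    (i j q : Fin m) (hq1 : q ∈ Finset.Icc i j) (hq2 : ∀ k ∈ Finset.Icc i j, A k ≤ A q) :
    i.val ≤ q.val ∧ q.val ≤ j.val ∧ ∀ k, i.val ≤ k → k ≤ j.val → E k ≤ E q.val := by
  rw [Finset.mem_Icc] at hq1
  refine ⟨hq1.1, hq1.2, ?_⟩
  intro k hk1 hk2
  have hk : k < m := lt_of_le_of_lt hk2 j.isLt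
  rw [hE k hk, hE q.val q.isLt]
  have : A ⟨q.val, q.isLt⟩ = A q := by congr 1
  rw [this]
  exact hq2 ⟨k, hk⟩ (Finset.mem_Icc.2 ⟨hk1, hk2⟩)

/-- The set in the theorem. -/
def S (m : ℕ) : Set (Fin m → Fin m → Fin m) :=
  {f | ∃ A : Fin m → ℝ, Function.Injective A ∧
        ∀ i j : Fin m,
          (i ≤ j → f i j ∈ Finset.Icc i j ∧ ∀ k ∈ Finset.Icc i j, A k ≤ A (f i j)) ∧
          (j < i → f i j = i)}

noncomputable def Phi (m : ℕ) (t : BinaryTree Unit) : Fin m → Fin m → Fin m := ansF (canonA m t)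

theorem Phi_mem {m : ℕ} {t : BinaryTree Unit} (h : t.numNodes = m) : Phi m t ∈ S m := by
  refine ⟨canonA m t, canonA_injective h, fun i j => ⟨fun hij => ansF_spec _ hij, fun hij => ansF_lt _ hij⟩⟩

/-- extension of a Fin array -/
noncomputable def ext {m : ℕ} (A : Fin m → ℝ) : ℕ → ℝ := fun k => if h : k < m then A ⟨k, h⟩ else 0

theorem ext_canonA {m : ℕ} {t : BinaryTree Unit} (h : t.numNodes = m) (k : ℕ) (hk : k < m) :
    canonExt t k = canonA m t ⟨k, hk⟩ := rfl

theorem ext_injOn {m : ℕ} {A : Fin m → ℝ} (hA : Function.Injective A) :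
    Set.InjOn (ext A) (Set.Ico 0 m) := by
  intro a ha b hb hab
  simp only [Set.mem_Ico] at ha hb
  rw [ext, ext, dif_pos ha.2, dif_pos hb.2] at hab
  exact Fin.mk.inj_iff.1 (hA hab)

/-- Main determination lemma : if `f ∈ S m` via `A`, and `Match (ext A) 0 t` with
`t.numNodes = m` then `f = Phi m t`. -/
theorem eq_Phi {m : ℕ} {f : Fin m → Fin m → Fin m} (A : Fin m → ℝ)
    (hS : ∀ i j : Fin m,
          (i ≤ j → f i j ∈ Finset.Icc i j ∧ ∀ k ∈ Finset.Icc i j, A k ≤ A (f i j)) ∧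
          (j < i → f i j = i))
    {t : BinaryTree Unit} (hn : t.numNodes = m) (hM : Match (ext A) 0 t) : f = Phi m t := by
  funext i j
  rcases le_or_gt i j with hij | hij
  · obtain ⟨h1, h2⟩ := (hS i j).1 hij
    obtain ⟨hb1, hb2, hb3⟩ := bridge A (ext A) (fun k hk => by rw [ext, dif_pos hk]) i j _ h1 h2
    obtain ⟨g1, g2⟩ := ansF_spec (canonA m t) hij
    obtain ⟨hc1, hc2, hc3⟩ := bridge (canonA m t) (canonExt t)
      (fun k hk => ext_canonA hn k hk) i j _ g1 g2
    have := argmax_eq_of_match t 0 (ext A) (canonExt t) hM (match_canonExt t)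
      i.val j.val (f i j).val ((Phi m t) i j).val
      (Nat.zero_le _) hij (by rw [hn]; simpa using j.isLt)
      hb1 hb2 hb3 hc1 hc2 hc3
    exact Fin.ext this
  · rw [(hS i j).2 hij, Phi, ansF_lt _ hij]

theorem S_eq_image (m : ℕ) :
    S m = ↑((BinaryTree.treesOfNumNodesEq m).image (Phi m)) := by
  ext f
  simp only [Finset.coe_image, Set.mem_image, Finset.mem_coe, BinaryTree.mem_treesOfNumNodesEq]
  constructor
  · rintro ⟨A, hA, hS⟩
    obtain ⟨t, hn, hM⟩ := exists_match (ext A) m 0 (by simpa using ext_injOn hA)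
    exact ⟨t, hn, (eq_Phi A hS hn hM).symm⟩
  · rintro ⟨t, hn, rfl⟩
    exact Phi_mem hn

theorem Phi_injOn (m : ℕ) : Set.InjOn (Phi m) (BinaryTree.treesOfNumNodesEq m) := by
  intro t ht t' ht' hEq
  rw [Finset.mem_coe, BinaryTree.mem_treesOfNumNodesEq] at ht ht'
  -- Match (canonExt t) 0 t'
  have hM' : Match (canonExt t) 0 t' := by
    refine match_transfer t' 0 (canonExt t) (canonExt t') ?_ (by rw [zero_add, ht', ← ht]; exact canonExt_injOn t) (match_canonExt t')
    intro x y p hx hxy hy hxp hpy hpmax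
    rw [zero_add, ht'] at hy
    have hxm : x < m := lt_of_le_of_lt hxy hy
    -- p is the unique argmax of canonExt t' hence equals Phi m t' x y = Phi m t x y,
    -- which is an argmax of canonExt t.
    set fi : Fin m := ⟨x, hxm⟩
    set fj : Fin m := ⟨y, hy⟩
    have hfij : fi ≤ fj := hxy
    obtain ⟨g1, g2⟩ := ansF_spec (canonA m t') hfij
    obtain ⟨hc1, hc2, hc3⟩ := bridge (canonA m t') (canonExt t')
      (fun k hk => ext_canonA ht' k hk) fi fj _ g1 g2
    have hpq : p = ((Phi m t') fi fj).val := by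
      refine argmax_eq_of_match t' 0 (canonExt t') (canonExt t')
        (match_canonExt t') (match_canonExt t') x y p _
        (Nat.zero_le _) hxy (by omega) hxp hpy hpmax hc1 hc2 hc3
    rw [hpq, ← hEq]
    obtain ⟨g1', g2'⟩ := ansF_spec (canonA m t) hfij
    obtain ⟨hd1, hd2, hd3⟩ := bridge (canonA m t) (canonExt t)
      (fun k hk => ext_canonA ht k hk) fi fj _ g1' g2'
    exact hd3
  exact (tree_eq_of_match t' t 0 (canonExt t) hM' (match_canonExt t) (by rw [ht, ht'])).symm


end RMQ


theorem rmq_answer_functions_card (m : ℕ) :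
    {f : Fin m → Fin m → Fin m | ∃ A : Fin m → ℝ, Function.Injective A ∧
        ∀ i j : Fin m,
          (i ≤ j → f i j ∈ Finset.Icc i j ∧ ∀ k ∈ Finset.Icc i j, A k ≤ A (f i j)) ∧
          (j < i → f i j = i)}.ncard = catalan m ∧
    catalan m = (2 * m).choose m / (m + 1) := by
  constructor
  · have h1 : {f : Fin m → Fin m → Fin m | ∃ A : Fin m → ℝ, Function.Injective A ∧
        ∀ i j : Fin m,
          (i ≤ j → f i j ∈ Finset.Icc i j ∧ ∀ k ∈ Finset.Icc i j, A k ≤ A (f i j)) ∧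
          (j < i → f i j = i)} = RMQ.S m := rfl
    rw [h1, RMQ.S_eq_image, Set.ncard_coe_finset,
      Finset.card_image_of_injOn (RMQ.Phi_injOn m), treesOfNumNodesEq_card_eq_catalan]
  · rw [catalan_eq_centralBinom_div, Nat.centralBinom]
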